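/- The corner map π maps the convex hull of C_max^s(nA+nB, m) onto the convex hull of C_max(nA,nB,m), and maps the closure of C_max^s(nA+nB, m) onto the closure of C_max(nA,nB,m): π(convexHull ℝ (C_max^s(nA+nB,m))) = convexHull ℝ (C_max(nA,nB,m)) and π(closure(C_max^s(nA+nB,m))) = closure(C_max(nA,nB,m)). -/

import Mathlib

open scoped BigOperators

/-- A correlation with `nA` questions for Alice, `nB` questions for Bob and `m` outcomes. -/
def IsCorrelation {nA nB m : ℕ} (p : Fin nA → Fin nB → Fin m → Fin m → ℝ) : Prop :=
  (∀ x y i j, 0 ≤ p x y i j) ∧ ∀ x y, (∑ i, ∑ j, p x y i j) = 1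

/-- A projection-valued measure with `m` outcomes on `ℂ^d`. -/
def IsPVM {d m : ℕ} (E : Fin m → Matrix (Fin d) (Fin d) ℂ) : Prop :=
  (∀ i, (E i).IsHermitian) ∧ (∀ i, E i * E i = E i) ∧ (∑ i, E i = 1)

/-- The set `C_{max,d}(nA,nB,m)` of maximally entangled correlations in dimension `d`. -/
def CmaxD (nA nB m d : ℕ) : Set (Fin nA → Fin nB → Fin m → Fin m → ℝ) :=
  {p | IsCorrelation p ∧
    ∃ (E : Fin nA → Fin m → Matrix (Fin d) (Fin d) ℂ)
      (F : Fin nB → Fin m → Matrix (Fin d) (Fin d) ℂ),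
      (∀ x, IsPVM (E x)) ∧ (∀ y, IsPVM (F y)) ∧
      ∀ x y i j, (p x y i j : ℂ) = (1 / (d : ℂ)) * (E x i * F y j).trace}

/-- The set `C_max(nA,nB,m)` of maximally entangled correlations. -/
def Cmax (nA nB m : ℕ) : Set (Fin nA → Fin nB → Fin m → Fin m → ℝ) :=
  ⋃ (d : ℕ) (_ : 1 ≤ d), CmaxD nA nB m d

/-- A correlation with the same questions for Alice and Bob is synchronous if
`p x x i j = 0` whenever `i ≠ j`. -/
def Synchronous {n m : ℕ} (p : Fin n → Fin n → Fin m → Fin m → ℝ) : Prop :=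
  ∀ x i j, i ≠ j → p x x i j = 0

/-- The set `C_max^s(n,m)` of synchronous maximally entangled correlations. -/
def CmaxSync (n m : ℕ) : Set (Fin n → Fin n → Fin m → Fin m → ℝ) :=
  {p ∈ Cmax n n m | Synchronous p}

/-- The corner of a correlation on `nA + nB` questions per player:
`corner p x y i j = p x (nA + y) i j`. -/
def corner {nA nB m : ℕ} (p : Fin (nA + nB) → Fin (nA + nB) → Fin m → Fin m → ℝ) :
    Fin nA → Fin nB → Fin m → Fin m → ℝ :=
  fun x y i j => p (Fin.castAdd nB x) (Fin.natAdd nA y) i j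

open Matrix

private lemma trace_conj_self {d : ℕ} (A : Matrix (Fin d) (Fin d) ℂ) :
    (Aᴴ * A).trace = ((∑ j, ∑ i, Complex.normSq (A i j) : ℝ) : ℂ) := by
  push_cast
  simp [Matrix.trace, Matrix.mul_apply, Matrix.conjTranspose_apply, Matrix.diag,
    Complex.normSq_eq_conj_mul_self]

private lemma eq_zero_of_trace_conj_self {d : ℕ} (A : Matrix (Fin d) (Fin d) ℂ)
    (h : (Aᴴ * A).trace = 0) : A = 0 := by
  rw [trace_conj_self] at h
  have h' : (∑ j, ∑ i, Complex.normSq (A i j) : ℝ) = 0 := by exact_mod_cast h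
  ext i j
  have h1 := (Finset.sum_eq_zero_iff_of_nonneg (fun j _ => Finset.sum_nonneg
    (fun i _ => Complex.normSq_nonneg _))).mp h' j (Finset.mem_univ j)
  have h2 := (Finset.sum_eq_zero_iff_of_nonneg (fun i _ => Complex.normSq_nonneg _)).mp h1 i
    (Finset.mem_univ i)
  simpa using Complex.normSq_eq_zero.mp h2

private lemma trace_proj_mul {d : ℕ} (P Q : Matrix (Fin d) (Fin d) ℂ)
    (hP : P.IsHermitian) (hP2 : P * P = P) (hQ : Q.IsHermitian) (hQ2 : Q * Q = Q) :
    (P * Q).trace = ((P * Q)ᴴ * (P * Q)).trace := by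
  rw [conjTranspose_mul, hP.eq, hQ.eq]
  calc (P * Q).trace = (P * (Q * Q)).trace := by rw [hQ2]
    _ = ((P * Q) * Q).trace := by rw [mul_assoc]
    _ = (Q * (P * Q)).trace := Matrix.trace_mul_comm _ _
    _ = ((Q * (P * P)) * Q).trace := by rw [hP2]; congr 1; simp only [mul_assoc]
    _ = (Q * P * (P * Q)).trace := by congr 1; simp only [mul_assoc]

private lemma trace_proj_mul_real {d : ℕ} (P Q : Matrix (Fin d) (Fin d) ℂ)
    (hP : P.IsHermitian) (hP2 : P * P = P) (hQ : Q.IsHermitian) (hQ2 : Q * Q = Q) :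
    ∃ r : ℝ, 0 ≤ r ∧ (P * Q).trace = (r : ℂ) := by
  refine ⟨∑ j, ∑ i, Complex.normSq ((P * Q) i j), ?_, ?_⟩
  · exact Finset.sum_nonneg fun j _ => Finset.sum_nonneg fun i _ => Complex.normSq_nonneg _
  · rw [trace_proj_mul P Q hP hP2 hQ hQ2, trace_conj_self]

private lemma pvm_mul_eq_zero {d m : ℕ} {E : Fin m → Matrix (Fin d) (Fin d) ℂ}
    (hE : IsPVM E) {i j : Fin m} (hij : i ≠ j) : E i * E j = 0 := by
  obtain ⟨hherm, hidem, hsum⟩ := hE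
  set P := E j with hPdef
  have key : ∀ k, k ≠ j → E k * P = 0 := by
    intro k hk
    have hmatsum : ∑ l ∈ Finset.univ.erase j, P * E l * P = 0 := by
      have : ∑ l ∈ Finset.univ.erase j, P * E l * P
          = P * (∑ l ∈ Finset.univ.erase j, E l) * P := by
        rw [Finset.mul_sum, Finset.sum_mul]
      rw [this, Finset.sum_erase_eq_sub (Finset.mem_univ j), hsum]
      simp only [Matrix.mul_sub, Matrix.sub_mul, Matrix.mul_one]
      rw [← hPdef, hidem j]
      simp [← hPdef, hidem j]
      rw [hPdef, hidem j, sub_self]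
    have hconj : ∀ l, (E l * P)ᴴ * (E l * P) = P * E l * P := by
      intro l
      rw [conjTranspose_mul, (hherm l).eq, (hherm j).eq, ← hPdef]
      calc P * E l * (E l * P) = P * (E l * E l) * P := by simp only [mul_assoc]
        _ = P * E l * P := by rw [hidem l]
    have htr : ∑ l ∈ Finset.univ.erase j, ((E l * P)ᴴ * (E l * P)).trace = 0 := by
      simp_rw [hconj]
      rw [← Matrix.trace_sum, hmatsum, Matrix.trace_zero]
    have hre : ∑ l ∈ Finset.univ.erase j,
        (∑ b, ∑ a, Complex.normSq ((E l * P) a b)) = 0 := by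
      have := htr
      simp_rw [trace_conj_self] at this
      exact_mod_cast this
    have hzero := (Finset.sum_eq_zero_iff_of_nonneg (fun l _ =>
      Finset.sum_nonneg fun b _ => Finset.sum_nonneg fun a _ => Complex.normSq_nonneg _)).mp
      hre k (Finset.mem_erase.mpr ⟨hk, Finset.mem_univ k⟩)
    apply eq_zero_of_trace_conj_self
    rw [trace_conj_self, hzero]
    simp
  exact key i hij

/-- The key image identity: the corner map sends `C_max^s(nA+nB,m)` onto `C_max(nA,nB,m)`. -/
lemma corner_image_CmaxSync (nA nB m : ℕ) :
    corner '' (CmaxSync (nA + nB) m) = Cmax nA nB m := by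
  apply Set.Subset.antisymm
  · rintro q ⟨p, ⟨hpC, hsync⟩, rfl⟩
    rw [Cmax, Set.mem_iUnion] at hpC ⊢
    obtain ⟨d, hpC⟩ := hpC
    rw [Set.mem_iUnion] at hpC
    obtain ⟨hd, ⟨hcorr, E, F, hE, hF, htr⟩⟩ := hpC
    refine ⟨d, ?_⟩
    rw [Set.mem_iUnion]
    refine ⟨hd, ?_, fun x => E (Fin.castAdd nB x), fun y => F (Fin.natAdd nA y),
      fun x => hE _, fun y => hF _, fun x y i j => htr _ _ _ _⟩
    exact ⟨fun x y i j => hcorr.1 _ _ _ _, fun x y => hcorr.2 _ _⟩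
  · rintro p hp
    rw [Cmax, Set.mem_iUnion] at hp
    obtain ⟨d, hp⟩ := hp
    rw [Set.mem_iUnion] at hp
    obtain ⟨hd, ⟨hcorr, E, F, hE, hF, htr⟩⟩ := hp
    -- combined family of PVMs
    set G : Fin (nA + nB) → Fin m → Matrix (Fin d) (Fin d) ℂ :=
      fun u => Fin.addCases (fun x => E x) (fun y => F y) u with hGdef
    have hGl : ∀ x : Fin nA, G (Fin.castAdd nB x) = E x := fun x => Fin.addCases_left x
    have hGr : ∀ y : Fin nB, G (Fin.natAdd nA y) = F y := fun y => Fin.addCases_right y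
    have hG : ∀ u, IsPVM (G u) := by
      intro u
      refine Fin.addCases (fun x => ?_) (fun y => ?_) u
      · rw [hGl]; exact hE x
      · rw [hGr]; exact hF y
    -- the synchronous correlation
    have hreal : ∀ u v i j, ∃ r : ℝ, 0 ≤ r ∧ (G u i * G v j).trace = (r : ℂ) :=
      fun u v i j => trace_proj_mul_real _ _ ((hG u).1 i) ((hG u).2.1 i)
        ((hG v).1 j) ((hG v).2.1 j)
    set q : Fin (nA + nB) → Fin (nA + nB) → Fin m → Fin m → ℝ :=
      fun u v i j => (1 / (d : ℝ)) * ((G u i * G v j).trace.re) with hqdef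
    have hdpos : (0 : ℝ) < d := by exact_mod_cast hd
    have hqC : ∀ u v i j, ((q u v i j : ℝ) : ℂ) = (1 / (d : ℂ)) * (G u i * G v j).trace := by
      intro u v i j
      obtain ⟨r, hr0, hr⟩ := hreal u v i j
      rw [hqdef]
      simp only
      rw [hr]
      push_cast
      simp
    have hqnonneg : ∀ u v i j, 0 ≤ q u v i j := by
      intro u v i j
      obtain ⟨r, hr0, hr⟩ := hreal u v i j
      rw [hqdef]
      simp only
      rw [hr]
      positivity
    have hqsum : ∀ u v, (∑ i, ∑ j, q u v i j) = 1 := by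
      intro u v
      have hc : ((∑ i, ∑ j, q u v i j : ℝ) : ℂ) = 1 := by
        push_cast
        calc (∑ i, ∑ j, ((q u v i j : ℝ) : ℂ))
            = ∑ i, ∑ j, (1 / (d : ℂ)) * (G u i * G v j).trace := by
              exact Finset.sum_congr rfl fun i _ => Finset.sum_congr rfl fun j _ => hqC u v i j
          _ = (1 / (d : ℂ)) * ((∑ i, G u i) * (∑ j, G v j)).trace := by
              rw [Finset.sum_mul]
              rw [Matrix.trace_sum, Finset.mul_sum]
              refine Finset.sum_congr rfl fun i _ => ?_
              rw [Finset.mul_sum, Matrix.trace_sum, Finset.mul_sum]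
          _ = (1 / (d : ℂ)) * (1 : Matrix (Fin d) (Fin d) ℂ).trace := by
              rw [(hG u).2.2, (hG v).2.2, Matrix.one_mul]
          _ = 1 := by
              rw [Matrix.trace_one]
              have : (d : ℂ) ≠ 0 := by exact_mod_cast hdpos.ne'
              field_simp
              simp
      exact_mod_cast hc
    have hqsync : Synchronous q := by
      intro u i j hij
      rw [hqdef]
      simp only
      rw [pvm_mul_eq_zero (hG u) hij]
      simp
    have hqmem : q ∈ CmaxSync (nA + nB) m := by
      refine ⟨?_, hqsync⟩
      rw [Cmax, Set.mem_iUnion]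
      refine ⟨d, ?_⟩
      rw [Set.mem_iUnion]
      exact ⟨hd, ⟨hqnonneg, hqsum⟩, G, G, hG, hG, hqC⟩
    refine ⟨q, hqmem, ?_⟩
    funext x y i j
    rw [corner]
    have h1 : ((q (Fin.castAdd nB x) (Fin.natAdd nA y) i j : ℝ) : ℂ) = ((p x y i j : ℝ) : ℂ) := by
      rw [hqC, hGl, hGr, htr]
    exact_mod_cast h1

/-- `corner` as a linear map. -/
def cornerL (nA nB m : ℕ) :
    (Fin (nA + nB) → Fin (nA + nB) → Fin m → Fin m → ℝ) →ₗ[ℝ]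
      (Fin nA → Fin nB → Fin m → Fin m → ℝ) where
  toFun := corner
  map_add' := fun _ _ => rfl
  map_smul' := fun _ _ => rfl

lemma corner_continuous (nA nB m : ℕ) :
    Continuous (corner : (Fin (nA + nB) → Fin (nA + nB) → Fin m → Fin m → ℝ) →
      (Fin nA → Fin nB → Fin m → Fin m → ℝ)) := by
  refine continuous_pi fun x => continuous_pi fun y => continuous_pi fun i =>
    continuous_pi fun j => ?_
  exact (continuous_apply j).comp ((continuous_apply i).comp
    ((continuous_apply (Fin.natAdd nA y)).comp (continuous_apply (Fin.castAdd nB x))))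

lemma isCompact_cube (n n' m : ℕ) :
    IsCompact {p : Fin n → Fin n' → Fin m → Fin m → ℝ | ∀ u v i j, p u v i j ∈ Set.Icc (0:ℝ) 1} := by
  have hclosed : IsClosed
      {p : Fin n → Fin n' → Fin m → Fin m → ℝ | ∀ u v i j, p u v i j ∈ Set.Icc (0:ℝ) 1} := by
    have : {p : Fin n → Fin n' → Fin m → Fin m → ℝ | ∀ u v i j, p u v i j ∈ Set.Icc (0:ℝ) 1}
        = ⋂ u, ⋂ v, ⋂ i, ⋂ j, (fun p : Fin n → Fin n' → Fin m → Fin m → ℝ =>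
            p u v i j) ⁻¹' (Set.Icc (0:ℝ) 1) := by
      ext p; simp [Set.mem_iInter]
    rw [this]
    refine isClosed_iInter fun u => isClosed_iInter fun v => isClosed_iInter fun i =>
      isClosed_iInter fun j => IsClosed.preimage ?_ isClosed_Icc
    exact (continuous_apply j).comp ((continuous_apply i).comp
      ((continuous_apply v).comp (continuous_apply u)))
  have hsub : {p : Fin n → Fin n' → Fin m → Fin m → ℝ | ∀ u v i j, p u v i j ∈ Set.Icc (0:ℝ) 1}
      ⊆ Metric.closedBall 0 1 := by
    intro p hp
    rw [Metric.mem_closedBall]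
    refine (dist_pi_le_iff (by norm_num)).mpr fun u => ?_
    refine (dist_pi_le_iff (by norm_num)).mpr fun v => ?_
    refine (dist_pi_le_iff (by norm_num)).mpr fun i => ?_
    refine (dist_pi_le_iff (by norm_num)).mpr fun j => ?_
    have := hp u v i j
    simp only [Pi.zero_apply, Real.dist_eq, sub_zero]
    rw [abs_le]
    constructor <;> [linarith [this.1]; exact this.2]
  exact (isCompact_closedBall 0 1).of_isClosed_subset hclosed hsub

lemma CmaxSync_subset_cube (n m : ℕ) :
    CmaxSync n m ⊆ {p : Fin n → Fin n → Fin m → Fin m → ℝ |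
      ∀ u v i j, p u v i j ∈ Set.Icc (0:ℝ) 1} := by
  rintro p ⟨hpC, _⟩ 
  rw [Cmax, Set.mem_iUnion] at hpC
  obtain ⟨d, hpC⟩ := hpC
  rw [Set.mem_iUnion] at hpC
  obtain ⟨hd, hcorr, _⟩ := hpC
  intro u v i j
  refine ⟨hcorr.1 u v i j, ?_⟩
  calc p u v i j ≤ ∑ j', p u v i j' :=
        Finset.single_le_sum (fun j' _ => hcorr.1 u v i j') (Finset.mem_univ j)
    _ ≤ ∑ i', ∑ j', p u v i' j' :=
        Finset.single_le_sum (fun i' _ => Finset.sum_nonneg fun j' _ => hcorr.1 u v i' j')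
          (Finset.mem_univ i)
    _ = 1 := hcorr.2 u v

/-- STATEMENT 13: the corner map sends the convex hull of `C_max^s(nA+nB,m)` onto the
convex hull of `C_max(nA,nB,m)`, and the closure of `C_max^s(nA+nB,m)` onto the closure
of `C_max(nA,nB,m)`. -/
theorem corner_image_convexHull_and_closure_CmaxSync (nA nB m : ℕ)
    (hA : 1 ≤ nA) (hB : 1 ≤ nB) (hm : 1 ≤ m) :
    corner '' (convexHull ℝ (CmaxSync (nA + nB) m)) = convexHull ℝ (Cmax nA nB m) ∧
    corner '' (closure (CmaxSync (nA + nB) m)) = closure (Cmax nA nB m) := by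
  constructor
  · have h := (cornerL nA nB m).image_convexHull (CmaxSync (nA + nB) m)
    have hc : ⇑(cornerL nA nB m) = corner := rfl
    rw [hc] at h
    rw [h, corner_image_CmaxSync]
  · apply Set.Subset.antisymm
    · calc corner '' (closure (CmaxSync (nA + nB) m))
          ⊆ closure (corner '' (CmaxSync (nA + nB) m)) :=
            image_closure_subset_closure_image (corner_continuous nA nB m)
        _ = closure (Cmax nA nB m) := by rw [corner_image_CmaxSync]
    · have hcomp : IsCompact (closure (CmaxSync (nA + nB) m)) :=
        (isCompact_cube (nA + nB) (nA + nB) m).of_isClosed_subset isClosed_closure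
          (closure_minimal (CmaxSync_subset_cube (nA + nB) m)
            (isCompact_cube (nA + nB) (nA + nB) m).isClosed)
      have hclosed : IsClosed (corner '' (closure (CmaxSync (nA + nB) m))) :=
        (hcomp.image (corner_continuous nA nB m)).isClosed
      refine closure_minimal ?_ hclosed
      rw [← corner_image_CmaxSync]
      exact Set.image_mono subset_closure
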